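/- For any suboptimal solution u⁰ ∈ 𝒰̃_N(x₀) := {u ∈ 𝒰_N(x₀) : J_N(x₀, u) ≤ J_N(x₀, w(x₀))}, where w(x₀) is an admissible warm-start, and x⁺ = f(x₀, u⁰(0)), the shift-and-append successor warm-start w⁺ of u⁰ satisfies J_N(x⁺, w⁺) ≤ J_N(x₀, w(x₀)) − ℓ(x₀, u⁰(0)). -/

import Mathlib

def traj {X U : Type*} [Zero U] (f : X → U → X) (N : ℕ) (x0 : X) (u : Fin N → U) : ℕ → X
  | 0 => x0
  | k + 1 => f (traj f N x0 u k) (if h : k < N then u ⟨k, h⟩ else 0)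

def Adm {X U : Type*} [Zero U] (f : X → U → X) (N : ℕ) (Xset : Set X) (Uset : Set U)
    (Xf : Set X) (x0 : X) (u : Fin N → U) : Prop :=
  (∀ k, u k ∈ Uset) ∧ (∀ k < N, traj f N x0 u k ∈ Xset) ∧ traj f N x0 u N ∈ Xf

def costJ {X U : Type*} [Zero U] (f : X → U → X) (ℓ : X → U → ℝ) (Vf : X → ℝ) (N : ℕ)
    (x0 : X) (u : Fin N → U) : ℝ :=
  (∑ k ∈ Finset.range N, ℓ (traj f N x0 u k) (if h : k < N then u ⟨k, h⟩ else 0)) +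
    Vf (traj f N x0 u N)

def shiftAppend {X U : Type*} [Zero U] (f : X → U → X) (κ : X → U) (N : ℕ) (x0 : X)
    (u : Fin N → U) : Fin N → U :=
  fun k => if h : (k : ℕ) + 1 < N then u ⟨(k : ℕ) + 1, h⟩ else κ (traj f N x0 u N)

/-- For any suboptimal solution `u⁰ ∈ 𝒰̃_N(x₀) = {u ∈ 𝒰_N(x₀) : J_N(x₀,u) ≤ J_N(x₀,w(x₀))}`
(where `w(x₀)` is an admissible warm-start) and `x⁺ = f(x₀, u⁰(0))`, the shift-and-append
successor warm-start `w⁺` of `u⁰` satisfies `J_N(x⁺, w⁺) ≤ J_N(x₀, w(x₀)) − ℓ(x₀, u⁰(0))`. -/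
theorem stmt11 (n m N : ℕ) (hN : 0 < N)
    (f : EuclideanSpace ℝ (Fin n) → EuclideanSpace ℝ (Fin m) → EuclideanSpace ℝ (Fin n))
    (ℓ : EuclideanSpace ℝ (Fin n) → EuclideanSpace ℝ (Fin m) → ℝ)
    (Vf : EuclideanSpace ℝ (Fin n) → ℝ)
    (Xset Xf : Set (EuclideanSpace ℝ (Fin n))) (Uset : Set (EuclideanSpace ℝ (Fin m)))
    (κ : EuclideanSpace ℝ (Fin n) → EuclideanSpace ℝ (Fin m))
    (hinv : ∀ x ∈ Xf, f x (κ x) ∈ Xf)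
    (hCLF : ∀ x ∈ Xf, Vf (f x (κ x)) ≤ Vf x - ℓ x (κ x))
    (x0 : EuclideanSpace ℝ (Fin n)) (w0 u0 : Fin N → EuclideanSpace ℝ (Fin m))
    (hw0adm : Adm f N Xset Uset Xf x0 w0)
    (hu0adm : Adm f N Xset Uset Xf x0 u0)
    (hsub : costJ f ℓ Vf N x0 u0 ≤ costJ f ℓ Vf N x0 w0) :
    costJ f ℓ Vf N (f x0 (u0 ⟨0, hN⟩)) (shiftAppend f κ N x0 u0) ≤
      costJ f ℓ Vf N x0 w0 - ℓ x0 (u0 ⟨0, hN⟩) := by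
  obtain ⟨M, rfl⟩ : ∃ M, N = M + 1 := ⟨N - 1, (Nat.succ_pred_eq_of_pos hN).symm⟩
  set xp := f x0 (u0 ⟨0, hN⟩) with hxp
  set w' := shiftAppend f κ (M + 1) x0 u0 with hw'
  set xN := traj f (M + 1) x0 u0 (M + 1) with hxN
  have hxNf : xN ∈ Xf := hu0adm.2.2
  have hM : M < M + 1 := Nat.lt_succ_self M
  have key : ∀ k, k < M + 1 → traj f (M + 1) xp w' k = traj f (M + 1) x0 u0 (k + 1) := by
    intro k hk
    induction k with
    | zero =>
        show xp = f (traj f (M + 1) x0 u0 0) _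
        rw [dif_pos hN]; rfl
    | succ k ih =>
        have hk' : k < M + 1 := Nat.lt_of_succ_lt hk
        have harg : w' ⟨k, hk'⟩ = u0 ⟨k + 1, hk⟩ := by simp [hw', shiftAppend, hk]
        show f (traj f (M + 1) xp w' k) _ = f (traj f (M + 1) x0 u0 (k + 1)) _
        rw [ih hk', dif_pos hk', dif_pos hk, harg]
  have hargM : w' ⟨M, hM⟩ = κ xN := by simp [hw', shiftAppend, hxN]
  have keyN : traj f (M + 1) xp w' (M + 1) = f xN (κ xN) := by
    show f (traj f (M + 1) xp w' M) _ = _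
    rw [dif_pos hM, key M hM, hargM, ← hxN]
  have hsum : (∑ k ∈ Finset.range (M + 1),
      ℓ (traj f (M + 1) xp w' k) (if h : k < M + 1 then w' ⟨k, h⟩ else 0)) =
      (∑ k ∈ Finset.range M,
        ℓ (traj f (M + 1) x0 u0 (k + 1)) (if h : k + 1 < M + 1 then u0 ⟨k + 1, h⟩ else 0)) +
      ℓ xN (κ xN) := by
    rw [Finset.sum_range_succ]
    congr 1
    · apply Finset.sum_congr rfl
      intro k hk
      have hk' : k < M := Finset.mem_range.mp hk
      have hkN : k < M + 1 := Nat.lt_succ_of_lt hk'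
      have hk1 : k + 1 < M + 1 := Nat.succ_lt_succ hk'
      have harg : w' ⟨k, hkN⟩ = u0 ⟨k + 1, hk1⟩ := by simp [hw', shiftAppend, hk1]
      rw [dif_pos hkN, dif_pos hk1, key k hkN, harg]
    · rw [dif_pos hM, key M hM, hargM, ← hxN]
  have hsum0 : (∑ k ∈ Finset.range (M + 1),
      ℓ (traj f (M + 1) x0 u0 k) (if h : k < M + 1 then u0 ⟨k, h⟩ else 0)) =
      ℓ x0 (u0 ⟨0, hN⟩) + ∑ k ∈ Finset.range M,
        ℓ (traj f (M + 1) x0 u0 (k + 1)) (if h : k + 1 < M + 1 then u0 ⟨k + 1, h⟩ else 0) := by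
    rw [Finset.sum_range_succ' _ M, add_comm]
    congr 1
  have hCLFN := hCLF xN hxNf
  have hkey : costJ f ℓ Vf (M + 1) xp w' = costJ f ℓ Vf (M + 1) x0 u0 - ℓ x0 (u0 ⟨0, hN⟩)
      + (Vf (f xN (κ xN)) - (Vf xN - ℓ xN (κ xN))) := by
    unfold costJ
    rw [hsum, keyN, hsum0, ← hxN]
    ring
  show costJ f ℓ Vf (M + 1) xp w' ≤ _
  rw [hkey]
  linarith
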